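/- Let μ > 0 and let ψ : (0,∞) → ℝ be a nonnegative, nondecreasing, continuous, bounded function. Then the function u(x) = (1/√μ)(sinh(√μ x) ∫_x^∞ ψ(y) e^{-√μ y} dy + e^{-√μ x} ∫_0^x ψ(y) sinh(√μ y) dy) satisfies u(x) ≥ (1/(2μ)) ψ(x)(1 - e^{-2√μ x}) for all x > 0. -/

import Mathlib

open MeasureTheory Filter Topology Set

lemma exp_integral_Ioi (s x : ℝ) (hs : 0 < s) :
    (∫ y in Set.Ioi x, Real.exp (-s * y)) = Real.exp (-s * x) / s := by
  have h : ∀ y ∈ Set.Ici x, HasDerivAt (fun y => -Real.exp (-s * y) / s)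
      (Real.exp (-s * y)) y := by
    intro y _
    have hd : HasDerivAt (fun y : ℝ => -s * y) (-s) y := by
      simpa using (hasDerivAt_id y).const_mul (-s)
    have := (hd.exp.neg).div_const s
    refine this.congr_deriv ?_
    field_simp
  have htend : Tendsto (fun y => -Real.exp (-s * y) / s) atTop (𝓝 (-0 / s)) := by
    apply Tendsto.div_const
    apply Tendsto.neg
    have : Tendsto (fun y : ℝ => -s * y) atTop atBot :=
      Tendsto.const_mul_atTop_of_neg (neg_neg_iff_pos.mpr hs) tendsto_id
    exact Real.tendsto_exp_atBot.comp this
  have := MeasureTheory.integral_Ioi_of_hasDerivAt_of_tendsto' h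
    (exp_neg_integrableOn_Ioi x hs) htend
  rw [this]
  field_simp
  ring

theorem stmt1 (μ : ℝ) (hμ : 0 < μ) (ψ : ℝ → ℝ)
    (hpos : ∀ x > 0, 0 ≤ ψ x)
    (hmono : MonotoneOn ψ (Set.Ioi 0))
    (hcont : ContinuousOn ψ (Set.Ioi 0))
    (hbdd : ∃ Cb : ℝ, ∀ x > 0, ψ x ≤ Cb)
    (u : ℝ → ℝ)
    (hu : u = fun x => (1 / Real.sqrt μ) *
      (Real.sinh (Real.sqrt μ * x) *
        (∫ y in Set.Ioi x, ψ y * Real.exp (-(Real.sqrt μ) * y)) +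
       Real.exp (-(Real.sqrt μ) * x) *
        (∫ y in Set.Ioo 0 x, ψ y * Real.sinh (Real.sqrt μ * y)))) :
    ∀ x > 0, u x ≥ (1 / (2 * μ)) * ψ x * (1 - Real.exp (-2 * Real.sqrt μ * x)) := by
  intro x hx
  obtain ⟨Cb, hCb⟩ := hbdd
  set s := Real.sqrt μ with hs_def
  have hs : 0 < s := Real.sqrt_pos.mpr hμ
  have hs2 : s * s = μ := Real.mul_self_sqrt hμ.le
  -- integrability facts
  have hexp_int : IntegrableOn (fun y : ℝ => Real.exp (-s * y)) (Set.Ioi x) :=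
    exp_neg_integrableOn_Ioi x hs
  have hmeas : AEStronglyMeasurable ψ (volume.restrict (Set.Ioi x)) :=
    (hcont.mono (Set.Ioi_subset_Ioi hx.le)).aestronglyMeasurable measurableSet_Ioi
  have hmeas2 : AEStronglyMeasurable (fun y => ψ y * Real.exp (-s * y))
      (volume.restrict (Set.Ioi x)) :=
    hmeas.mul (Continuous.aestronglyMeasurable (by fun_prop))
  have hint : IntegrableOn (fun y => ψ y * Real.exp (-s * y)) (Set.Ioi x) := by
    apply Integrable.mono' (hexp_int.const_mul Cb) hmeas2
    filter_upwards [MeasureTheory.ae_restrict_mem measurableSet_Ioi] with y hy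
    have hy0 : 0 < y := lt_trans hx hy
    rw [Real.norm_eq_abs, abs_of_nonneg (mul_nonneg (hpos y hy0) (Real.exp_nonneg _))]
    exact mul_le_mul_of_nonneg_right (hCb y hy0) (Real.exp_nonneg _)
  have hint2 : IntegrableOn (fun y => ψ x * Real.exp (-s * y)) (Set.Ioi x) :=
    hexp_int.const_mul (ψ x)
  -- first integral lower bound
  have h1 : ψ x * (Real.exp (-s * x) / s) ≤ ∫ y in Set.Ioi x, ψ y * Real.exp (-s * y) := by
    have hle : ∫ y in Set.Ioi x, ψ x * Real.exp (-s * y)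
        ≤ ∫ y in Set.Ioi x, ψ y * Real.exp (-s * y) := by
      apply MeasureTheory.setIntegral_mono_on hint2 hint measurableSet_Ioi
      intro y hy
      exact mul_le_mul_of_nonneg_right
        (hmono hx (lt_trans hx hy) (le_of_lt hy)) (Real.exp_nonneg _)
    rwa [MeasureTheory.integral_const_mul, exp_integral_Ioi s x hs] at hle
  -- second integral nonneg
  have h2 : 0 ≤ ∫ y in Set.Ioo 0 x, ψ y * Real.sinh (s * y) := by
    apply MeasureTheory.setIntegral_nonneg measurableSet_Ioo
    intro y hy
    exact mul_nonneg (hpos y hy.1) (Real.sinh_nonneg_iff.mpr (mul_nonneg hs.le hy.1.le))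
  -- combine
  rw [hu]
  simp only
  have hsinh : 0 ≤ Real.sinh (s * x) := Real.sinh_nonneg_iff.mpr (by positivity)
  have key : (1 / s) * (Real.sinh (s * x) * (ψ x * (Real.exp (-s * x) / s)))
      = (1 / (2 * μ)) * ψ x * (1 - Real.exp (-2 * s * x)) := by
    rw [Real.sinh_eq]
    have he : Real.exp (s * x) * Real.exp (-(s * x)) = 1 := by
      rw [← Real.exp_add]; simp
    have he2 : Real.exp (-(s * x)) * Real.exp (-(s * x)) = Real.exp (-(2 * s * x)) := by
      rw [← Real.exp_add]; ring_nf
    rw [← hs2]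
    field_simp
    rw [show s * x * 2 = 2 * s * x by ring]
    linear_combination (ψ x) * he - (ψ x) * he2
  calc (1 / (2 * μ)) * ψ x * (1 - Real.exp (-2 * s * x))
      = (1 / s) * (Real.sinh (s * x) * (ψ x * (Real.exp (-s * x) / s))) := key.symm
    _ ≤ (1 / s) * (Real.sinh (s * x) * (∫ y in Set.Ioi x, ψ y * Real.exp (-s * y))) := by
        apply mul_le_mul_of_nonneg_left _ (by positivity)
        exact mul_le_mul_of_nonneg_left h1 hsinh
    _ ≤ (1 / s) * (Real.sinh (s * x) * (∫ y in Set.Ioi x, ψ y * Real.exp (-s * y))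
          + Real.exp (-s * x) * (∫ y in Set.Ioo 0 x, ψ y * Real.sinh (s * y))) := by
        apply mul_le_mul_of_nonneg_left _ (by positivity)
        nlinarith [mul_nonneg (Real.exp_nonneg (-s * x)) h2]
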